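/- Let n = 2d and let g = σ^d τ^d on V = C^{2d}. Then g^2 = (−1)^d Id_V, so g induces an involution on P^{2d-1}, and the eigenspace decomposition of Sym^2 V under the induced involution is ⟨W_0^+, W_1^-⟩ ⊕ ⟨W_0^-, W_1^+⟩, with dimensions (d^2, d(d+1)) if d is odd and (d(d+1), d^2) if d is even. -/

import Mathlib

open Module MvPolynomial

/-- `Sym² V` as the span of the quadratic monomials `x_i x_j`. -/
noncomputable def symSquare (n : ℕ) : Submodule ℂ (MvPolynomial (ZMod n) ℂ) :=
  Submodule.span ℂ { p | ∃ i j : ZMod n, p = X i * X j }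

/-- `W_l^± = span{ x_i x_j ± x_{i+d} x_{j+d} : i + j ≡ l (mod 2) }`. -/
noncomputable def Wlpm (d l : ℕ) (e : ℂ) : Submodule ℂ (MvPolynomial (ZMod (2 * d)) ℂ) :=
  Submodule.span ℂ
    { p | ∃ i j : ZMod (2 * d), (i + j).val % 2 = l ∧
        p = X i * X j + e • (X (i + (d : ZMod (2 * d))) * X (j + (d : ZMod (2 * d)))) }

/-- `g = σ^d τ^d` on `V = ℂ^{2d}`: on basis vectors, `g (x_j) = (−1)^j x_{j+d}`. -/
noncomputable def gMap (d : ℕ) : Module.End ℂ (ZMod (2 * d) → ℂ) :=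
  { toFun := fun f i => (-1 : ℂ) ^ ((i - (d : ZMod (2 * d))).val) * f (i - (d : ZMod (2 * d)))
    map_add' := by intros; funext i; simp [mul_add]
    map_smul' := by intros; funext i; simp [Pi.smul_apply, smul_eq_mul]; ring }

/-- The induced action `g ⊗ g` of `σ^d τ^d` on `Sym² V`, realized on polynomials by the
substitution `x_j ↦ (−1)^j x_{j+d}`; on the degree-2 part it is an involution. -/
noncomputable def gSym (d : ℕ) : Module.End ℂ (MvPolynomial (ZMod (2 * d)) ℂ) :=
  (MvPolynomial.aeval
    (fun j : ZMod (2 * d) =>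
      ((-1 : ℂ) ^ j.val) • MvPolynomial.X (j + (d : ZMod (2 * d))))).toLinearMap

/-! ### Auxiliary lemmas -/

lemma neg_one_pow_congr' {m n : ℕ} (h : m % 2 = n % 2) : ((-1:ℂ))^m = (-1)^n := by
  rw [← Nat.div_add_mod m 2, ← Nat.div_add_mod n 2, pow_add, pow_add, pow_mul, pow_mul, h]
  norm_num

lemma castEq' (d : ℕ) (hd : 0 < d) (x y : ℕ) (hx : x < 2*(2*d)) (hy : y < 2*(2*d)) :
    ((x : ZMod (2*d)) = (y : ZMod (2*d))) ↔ (x = y ∨ x = y + 2*d ∨ y = x + 2*d) := by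
  have hm : ∀ z, z < 2*(2*d) → z % (2*d) = if z < 2*d then z else z - 2*d := by
    intro z hz
    split
    · exact Nat.mod_eq_of_lt ‹_›
    · rw [Nat.mod_eq_sub_mod (by omega), Nat.mod_eq_of_lt (by omega)]
  rw [ZMod.natCast_eq_natCast_iff, Nat.ModEq, hm x hx, hm y hy]
  split <;> split <;> omega

lemma cast_add_2d (d x : ℕ) : ((x + 2*d : ℕ) : ZMod (2*d)) = (x : ZMod (2*d)) := by
  rw [Nat.cast_add, ZMod.natCast_self, add_zero]

lemma pair_eq {α : Type*} [DecidableEq α] {a b c e : α} :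
    ((Finsupp.single a 1 + Finsupp.single b 1 : α →₀ ℕ) = Finsupp.single c 1 + Finsupp.single e 1)
    ↔ ((a = c ∧ b = e) ∨ (a = e ∧ b = c)) := by
  constructor
  · intro h
    by_cases hca : c = a
    · subst hca
      have := add_left_cancel h
      exact Or.inl ⟨rfl, Finsupp.single_left_injective one_ne_zero this⟩
    · by_cases hea : e = a
      · subst hea
        rw [add_comm (Finsupp.single c 1)] at h
        have := add_left_cancel h
        have hb : b = c := Finsupp.single_left_injective one_ne_zero this
        exact Or.inr ⟨rfl, hb⟩
      · exfalso
        have := DFunLike.congr_fun h a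
        simp [Finsupp.single_apply, hca, hea] at this
  · rintro (⟨rfl, rfl⟩ | ⟨rfl, rfl⟩)
    · rfl
    · exact add_comm _ _

lemma X_mul_X' {σ : Type*} (i j : σ) :
    (X i * X j : MvPolynomial σ ℂ) = monomial (Finsupp.single i 1 + Finsupp.single j 1) 1 := by
  rw [X, X, monomial_mul, mul_one]

lemma val_cast_mod2 (d : ℕ) (hd : 0 < d) (x : ℕ) :
    ((x : ZMod (2*d)).val) % 2 = x % 2 := by
  haveI : NeZero (2*d) := ⟨by omega⟩
  rw [ZMod.val_natCast]
  exact Nat.mod_mod_of_dvd _ (Dvd.intro d rfl)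

lemma val_add_par (d : ℕ) (hd : 0 < d) (i j : ZMod (2*d)) :
    (i + j).val % 2 = (i.val + j.val) % 2 := by
  haveI : NeZero (2*d) := ⟨by omega⟩
  rw [ZMod.val_add]
  exact Nat.mod_mod_of_dvd _ (Dvd.intro d rfl)

/-! ### The family of generators -/

noncomputable def mon (d : ℕ) (x y : ℕ) : ZMod (2*d) →₀ ℕ :=
  Finsupp.single (x : ZMod (2*d)) 1 + Finsupp.single (y : ZMod (2*d)) 1

noncomputable def fam (d : ℕ) (s : ℂ) (a δ : ℕ) : MvPolynomial (ZMod (2*d)) ℂ :=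
  X ((a : ZMod (2*d))) * X (((a+δ : ℕ) : ZMod (2*d))) +
    (s * (-1:ℂ)^δ) • (X (((a+d:ℕ) : ZMod (2*d))) * X (((a+δ+d:ℕ) : ZMod (2*d))))

lemma mon_eq_iff (d : ℕ) (x y x' y' : ℕ) :
    mon d x y = mon d x' y' ↔
      (((x:ZMod (2*d)) = x' ∧ (y:ZMod (2*d)) = y') ∨
        ((x:ZMod (2*d)) = y' ∧ (y:ZMod (2*d)) = x')) :=
  pair_eq

lemma fam_eq_monomial (d : ℕ) (s : ℂ) (a δ : ℕ) :
    fam d s a δ = monomial (mon d a (a+δ)) 1 + monomial (mon d (a+d) (a+δ+d)) (s*(-1)^δ) := by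
  rw [fam, X_mul_X', X_mul_X', smul_monomial, smul_eq_mul, mul_one]
  rfl

lemma mon_rep_eq (d : ℕ) (hd : 0 < d) {a δ a' δ' : ℕ} (ha : a < d) (ha' : a' < d)
    (hδ : δ ≤ d) (hδ' : δ' ≤ d) :
    mon d a' (a'+δ') = mon d a (a+δ) ↔ (a' = a ∧ δ' = δ) := by
  rw [mon_eq_iff,
    castEq' d hd _ _ (by omega) (by omega), castEq' d hd _ _ (by omega) (by omega),
    castEq' d hd _ _ (by omega) (by omega), castEq' d hd _ _ (by omega) (by omega)]
  omega

lemma mon_shift_eq (d : ℕ) (hd : 0 < d) {a δ a' δ' : ℕ} (ha : a < d) (ha' : a' < d)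
    (hδ : δ ≤ d) (hδ' : δ' ≤ d) :
    mon d (a'+d) (a'+δ'+d) = mon d a (a+δ) ↔ (a' = a ∧ δ' = d ∧ δ = d) := by
  rw [mon_eq_iff,
    castEq' d hd _ _ (by omega) (by omega), castEq' d hd _ _ (by omega) (by omega),
    castEq' d hd _ _ (by omega) (by omega), castEq' d hd _ _ (by omega) (by omega)]
  omega

lemma coeff_fam (d : ℕ) (hd : 0 < d) (s : ℂ) {a δ a' δ' : ℕ} (ha : a < d) (ha' : a' < d)
    (hδ : δ ≤ d) (hδ' : δ' ≤ d) :
    coeff (mon d a (a+δ)) (fam d s a' δ') =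
      if a' = a ∧ δ' = δ then (if δ = d then 1 + s*(-1:ℂ)^d else 1) else 0 := by
  rw [fam_eq_monomial, coeff_add, coeff_monomial, coeff_monomial,
    if_congr (mon_rep_eq d hd ha ha' hδ hδ') rfl rfl,
    if_congr (mon_shift_eq d hd ha ha' hδ hδ') rfl rfl]
  by_cases h1 : a' = a ∧ δ' = δ
  · obtain ⟨rfl, rfl⟩ := h1
    by_cases h2 : δ' = d
    · subst h2
      simp
    · simp [h2]
  · rw [if_neg h1, if_neg (by rintro ⟨rfl, rfl, rfl⟩; exact h1 ⟨rfl, rfl⟩), if_neg h1]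
    norm_num

lemma fam_indep (d : ℕ) (hd : 0 < d) (s : ℂ) (N : ℕ) (hN : N ≤ d + 1)
    (hsd : N = d + 1 → s * (-1:ℂ)^d = 1) :
    LinearIndependent ℂ (fun k : Fin d × Fin N => fam d s k.1 k.2) := by
  rw [linearIndependent_iff']
  intro t g hg k hk
  classical
  have hc := congrArg (lcoeff ℂ (mon d k.1 (k.1 + k.2))) hg
  rw [map_sum, map_zero] at hc
  have hterm : ∀ j : Fin d × Fin N,
      lcoeff ℂ (mon d k.1 (k.1 + k.2)) (g j • fam d s j.1 j.2) =
        if j = k then g k * (if (k.2 : ℕ) = d then 1 + s*(-1:ℂ)^d else 1) else 0 := by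
    intro j
    rw [map_smul, smul_eq_mul, lcoeff_apply,
      coeff_fam d hd s (k.1.isLt) (j.1.isLt) (by omega) (by omega)]
    by_cases hjk : j = k
    · subst hjk
      rw [if_pos ⟨rfl, rfl⟩, if_pos rfl]
    · rw [if_neg ?_, mul_zero, if_neg hjk]
      rintro ⟨h1, h2⟩
      exact hjk (Prod.ext (Fin.ext h1) (Fin.ext h2))
  rw [Finset.sum_congr rfl (fun j _ => hterm j), Finset.sum_ite_eq' t k] at hc
  rw [if_pos hk] at hc
  rcases mul_eq_zero.1 hc with h | h
  · exact h
  · exfalso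
    by_cases hkd : (k.2 : ℕ) = d
    · have hNd : N = d + 1 := by have := k.2.isLt; omega
      rw [if_pos hkd, hsd hNd] at h
      norm_num at h
    · rw [if_neg hkd] at h
      norm_num at h

lemma gen_mem (d : ℕ) (hd : 0 < d) (s : ℂ) (hs : s = 1 ∨ s = -1) (N : ℕ)
    (hN : N = d ∨ N = d + 1)
    (hsd : s * (-1:ℂ)^d = if N = d + 1 then 1 else -1)
    (a b : ℕ) (ha2 : a < 2*d) (hb2 : b < 2*d) (hab : a ≤ b) :
    X ((a:ZMod (2*d))) * X ((b:ZMod (2*d))) +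
      (s * (-1:ℂ)^(((a:ZMod (2*d)) + (b:ZMod (2*d))).val)) •
        (X ((a:ZMod (2*d)) + (d:ZMod (2*d))) * X ((b:ZMod (2*d)) + (d:ZMod (2*d)))) ∈
      Submodule.span ℂ (Set.range (fun k : Fin d × Fin N => fam d s k.1 k.2)) := by
  haveI : NeZero (2*d) := ⟨by omega⟩
  set c := s * (-1:ℂ)^(((a:ZMod (2*d)) + (b:ZMod (2*d))).val) with hcdef
  have hc : c = s * (-1:ℂ)^(b - a) := by
    rw [hcdef]
    congr 1
    apply neg_one_pow_congr'
    have h := val_add_par d hd (a : ZMod (2*d)) (b : ZMod (2*d))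
    rw [ZMod.val_natCast_of_lt ha2, ZMod.val_natCast_of_lt hb2] at h
    omega
  have hc1 : c = 1 ∨ c = -1 := by
    rcases Nat.even_or_odd (b - a) with h | h
    · rcases hs with rfl | rfl
      · left; rw [hc, h.neg_one_pow, one_mul]
      · right; rw [hc, h.neg_one_pow, mul_one]
    · rcases hs with rfl | rfl
      · right; rw [hc, h.neg_one_pow, one_mul]
      · left; rw [hc, h.neg_one_pow]; norm_num
  have hc2 : c * c = 1 := by rcases hc1 with h | h <;> rw [h] <;> norm_num
  have e1 : (a:ZMod (2*d)) + (d:ZMod (2*d)) = ((a+d : ℕ) : ZMod (2*d)) := by push_cast; ring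
  have e2 : (b:ZMod (2*d)) + (d:ZMod (2*d)) = ((b+d : ℕ) : ZMod (2*d)) := by push_cast; ring
  rw [e1, e2]
  by_cases hDd : b - a = d
  · have hb' : b = a + d := by omega
    subst hb'
    have hceq : c = s * (-1:ℂ)^d := by rw [hc, hDd]
    rcases hN with hN1 | hN1
    · -- N = d : the generator vanishes
      have hceq' : c = -1 := by
        rw [hceq, hsd, if_neg (by omega)]
      have h2 : ((a+d+d : ℕ) : ZMod (2*d)) = (a : ZMod (2*d)) := by
        rw [show a + d + d = a + 2*d from by ring, cast_add_2d]
      rw [hceq', h2]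
      have hz : X ((a:ZMod (2*d))) * X (((a+d:ℕ):ZMod (2*d))) +
          (-1:ℂ) • (X (((a+d:ℕ):ZMod (2*d))) * X ((a:ZMod (2*d)))) = (0 : MvPolynomial (ZMod (2*d)) ℂ) := by
        rw [mul_comm (X (((a+d:ℕ):ZMod (2*d))))]
        rw [neg_smul, one_smul, add_neg_cancel]
      rw [hz]
      exact Submodule.zero_mem _
    · -- N = d + 1 : it is the fixed basis vector
      have had : a < d := by omega
      rw [hceq]
      exact Submodule.subset_span ⟨(⟨a, had⟩, ⟨d, by omega⟩), rfl⟩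
  · by_cases hDlt : b - a < d
    · by_cases had : a < d
      · -- small representative
        refine Submodule.subset_span ⟨(⟨a, had⟩, ⟨b - a, by omega⟩), ?_⟩
        show fam d s a (b - a) = _
        simp only [fam]
        rw [show a + (b - a) = b from by omega, ← hc]
      · -- shift the representative down by d
        have ha' : d ≤ a := le_of_not_gt had
        have hmem : fam d s (a-d) (b-a) ∈
            Submodule.span ℂ (Set.range (fun k : Fin d × Fin N => fam d s k.1 k.2)) :=
          Submodule.subset_span ⟨(⟨a-d, by omega⟩, ⟨b-a, by omega⟩), rfl⟩
        have key : X ((a:ZMod (2*d))) * X ((b:ZMod (2*d))) +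
            c • (X (((a+d:ℕ)) : ZMod (2*d)) * X (((b+d:ℕ) : ZMod (2*d)))) =
            c • fam d s (a-d) (b-a) := by
          simp only [fam]
          rw [show a - d + (b - a) = b - d from by omega,
            show a - d + d = a from by omega, show b - d + d = b from by omega, ← hc,
            show a + d = (a - d) + 2*d from by omega, cast_add_2d,
            show b + d = (b - d) + 2*d from by omega, cast_add_2d,
            smul_add, smul_smul, hc2, one_smul, add_comm]
        rw [key]
        exact Submodule.smul_mem _ _ hmem
    · -- large gap : use the partner pair
      have had : a < d := by omega
      have hbd : d ≤ b := by omega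
      have hmem : fam d s (b-d) (2*d - (b-a)) ∈
          Submodule.span ℂ (Set.range (fun k : Fin d × Fin N => fam d s k.1 k.2)) :=
        Submodule.subset_span ⟨(⟨b-d, by omega⟩, ⟨2*d - (b-a), by omega⟩), rfl⟩
      have hsc : s * (-1:ℂ)^(2*d - (b-a)) = c := by
        rw [hc]
        congr 1
        exact neg_one_pow_congr' (by omega)
      have key : X ((a:ZMod (2*d))) * X ((b:ZMod (2*d))) +
          c • (X (((a+d:ℕ)) : ZMod (2*d)) * X (((b+d:ℕ) : ZMod (2*d)))) =
          c • fam d s (b-d) (2*d - (b-a)) := by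
        simp only [fam]
        rw [show b - d + (2*d - (b-a)) = a + d from by omega,
          show b - d + d = b from by omega,
          show a + d + d = a + 2*d from by ring, cast_add_2d, hsc,
          show b + d = (b - d) + 2*d from by omega, cast_add_2d,
          smul_add, smul_smul, hc2, one_smul,
          mul_comm (X (((b-d:ℕ) : ZMod (2*d)))) (X (((a+d:ℕ) : ZMod (2*d)))),
          mul_comm (X ((b : ZMod (2*d)))) (X ((a : ZMod (2*d)))), add_comm]
      rw [key]
      exact Submodule.smul_mem _ _ hmem

lemma gen_mem' (d : ℕ) (hd : 0 < d) (s : ℂ) (hs : s = 1 ∨ s = -1) (N : ℕ)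
    (hN : N = d ∨ N = d + 1)
    (hsd : s * (-1:ℂ)^d = if N = d + 1 then 1 else -1) (i j : ZMod (2*d)) :
    X i * X j + (s * (-1:ℂ)^((i+j).val)) •
        (X (i + (d : ZMod (2*d))) * X (j + (d : ZMod (2*d)))) ∈
      Submodule.span ℂ (Set.range (fun k : Fin d × Fin N => fam d s k.1 k.2)) := by
  haveI : NeZero (2*d) := ⟨by omega⟩
  rcases le_total i.val j.val with h | h
  · have := gen_mem d hd s hs N hN hsd i.val j.val (ZMod.val_lt i) (ZMod.val_lt j) h
    rwa [ZMod.natCast_val, ZMod.natCast_val, ZMod.cast_id, ZMod.cast_id] at this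
  · have := gen_mem d hd s hs N hN hsd j.val i.val (ZMod.val_lt j) (ZMod.val_lt i) h
    rw [ZMod.natCast_val, ZMod.natCast_val, ZMod.cast_id, ZMod.cast_id] at this
    rwa [mul_comm (X j) (X i), add_comm j i,
      mul_comm (X (j + (d : ZMod (2*d)))) (X (i + (d : ZMod (2*d))))] at this

lemma sup_eq (d : ℕ) (hd : 0 < d) (s : ℂ) (hs : s = 1 ∨ s = -1) (N : ℕ)
    (hN : N = d ∨ N = d + 1) (hsd : s * (-1:ℂ)^d = if N = d + 1 then 1 else -1) :
    Wlpm d 0 s ⊔ Wlpm d 1 (-s) =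
      Submodule.span ℂ (Set.range (fun k : Fin d × Fin N => fam d s k.1 k.2)) := by
  haveI : NeZero (2*d) := ⟨by omega⟩
  rw [Wlpm, Wlpm, ← Submodule.span_union]
  apply le_antisymm
  · rw [Submodule.span_le]
    rintro p (⟨i, j, hpar, rfl⟩ | ⟨i, j, hpar, rfl⟩)
    · have he : s = s * (-1:ℂ)^((i+j).val) := by
        rw [Even.neg_one_pow (Nat.even_iff.2 hpar), mul_one]
      have hmem := gen_mem' d hd s hs N hN hsd i j
      rwa [← he] at hmem
    · have he : -s = s * (-1:ℂ)^((i+j).val) := by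
        rw [Odd.neg_one_pow (Nat.odd_iff.2 hpar), mul_neg_one]
      have hmem := gen_mem' d hd s hs N hN hsd i j
      rwa [← he] at hmem
  · rw [Submodule.span_le]
    rintro p ⟨k, rfl⟩
    apply Submodule.subset_span
    have hform : fam d s k.1 k.2 = X ((k.1 : ℕ) : ZMod (2*d)) * X (((k.1 : ℕ) + (k.2 : ℕ) : ℕ) : ZMod (2*d)) +
        (s*(-1:ℂ)^(k.2 : ℕ)) • (X ((((k.1 : ℕ) : ZMod (2*d))) + (d : ZMod (2*d))) *
          X (((((k.1 : ℕ) + (k.2 : ℕ) : ℕ) : ZMod (2*d))) + (d : ZMod (2*d)))) := by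
      simp only [fam]
      rw [show (((k.1 : ℕ) + d : ℕ) : ZMod (2*d)) = (((k.1 : ℕ) : ZMod (2*d)) + (d : ZMod (2*d))) from by push_cast; ring,
        show (((k.1 : ℕ) + (k.2 : ℕ) + d : ℕ) : ZMod (2*d)) = ((((k.1 : ℕ) + (k.2 : ℕ) : ℕ) : ZMod (2*d)) + (d : ZMod (2*d))) from by push_cast; ring]
    have hpar : ((((k.1 : ℕ) : ZMod (2*d)) + (((k.1 : ℕ) + (k.2 : ℕ) : ℕ) : ZMod (2*d))).val) % 2 = (k.2 : ℕ) % 2 := by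
      rw [show ((((k.1 : ℕ)) : ZMod (2*d)) + (((k.1 : ℕ) + (k.2 : ℕ) : ℕ) : ZMod (2*d))) =
          ((((k.1 : ℕ) + ((k.1 : ℕ) + (k.2 : ℕ)) : ℕ)) : ZMod (2*d)) from by push_cast; ring,
        val_cast_mod2 d hd]
      omega
    rcases Nat.even_or_odd (k.2 : ℕ) with hev | hod
    · left
      refine ⟨_, _, by rw [hpar]; exact Nat.even_iff.1 hev, ?_⟩
      show fam d s (k.1 : ℕ) (k.2 : ℕ) = _
      rw [hform, Even.neg_one_pow hev, mul_one]
    · right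
      refine ⟨_, _, by rw [hpar]; exact Nat.odd_iff.1 hod, ?_⟩
      show fam d s (k.1 : ℕ) (k.2 : ℕ) = _
      rw [hform, Odd.neg_one_pow hod, mul_neg_one]

theorem gMap_sq (d : ℕ) (hd : 0 < d) :
    (gMap d) ^ 2 = ((-1 : ℂ) ^ d) • (1 : Module.End ℂ (ZMod (2 * d) → ℂ)) := by
  haveI : NeZero (2*d) := ⟨by omega⟩
  have hδ0 : (d : ZMod (2*d)) + (d : ZMod (2*d)) = 0 := by
    rw [← Nat.cast_add]
    have : d + d = 2 * d := by ring
    rw [this, ZMod.natCast_self]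
  have hneg : ∀ x : ZMod (2*d), x - (d : ZMod (2*d)) = x + (d : ZMod (2*d)) := by
    intro x
    rw [sub_eq_add_neg, neg_eq_of_add_eq_zero_right hδ0]
  apply LinearMap.ext
  intro f
  funext i
  show gMap d (gMap d f) i = ((-1:ℂ)^d) * f i
  simp only [gMap, LinearMap.coe_mk, AddHom.coe_mk]
  have h2 : i - (d : ZMod (2*d)) - (d : ZMod (2*d)) = i := by
    rw [hneg, hneg, add_assoc, hδ0, add_zero]
  rw [h2, hneg, ← mul_assoc, ← pow_add]
  congr 1
  apply neg_one_pow_congr'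
  have hval : (i + (d : ZMod (2*d))).val = (i.val + d) % (2*d) := by
    rw [ZMod.val_add, ZMod.val_natCast_of_lt (by omega)]
  rw [hval]
  have := Nat.mod_mod_of_dvd (i.val + d) (Dvd.intro d rfl : (2:ℕ) ∣ 2*d)
  omega

lemma gSym_XX (d : ℕ) (hd : 0 < d) (i j : ZMod (2*d)) :
    gSym d (X i * X j) =
      ((-1:ℂ)^((i+j).val)) • (X (i + (d : ZMod (2*d))) * X (j + (d : ZMod (2*d)))) := by
  haveI : NeZero (2*d) := ⟨by omega⟩
  simp only [gSym, AlgHom.toLinearMap_apply, map_mul, aeval_X]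
  rw [smul_mul_smul_comm, ← pow_add]
  congr 1
  apply neg_one_pow_congr'
  rw [val_add_par d hd]

lemma gSym_gen (d : ℕ) (hd : 0 < d) (i j : ZMod (2*d)) (s : ℂ) (hs : s = 1 ∨ s = -1)
    (e : ℂ) (he : e = s * (-1:ℂ)^((i+j).val)) :
    gSym d (X i * X j + e • (X (i+(d:ZMod (2*d))) * X (j+(d:ZMod (2*d)))))
    = s • (X i * X j + e • (X (i+(d:ZMod (2*d))) * X (j+(d:ZMod (2*d))))) := by
  have hδ0 : (d : ZMod (2*d)) + (d : ZMod (2*d)) = 0 := by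
    rw [← Nat.cast_add]
    have : d + d = 2 * d := by ring
    rw [this, ZMod.natCast_self]
  set δ : ZMod (2*d) := (d : ZMod (2*d)) with hδ
  have hii : i + δ + δ = i := by rw [add_assoc, hδ0, add_zero]
  have hjj : j + δ + δ = j := by rw [add_assoc, hδ0, add_zero]
  have hsum : (i + δ) + (j + δ) = i + j := by rw [add_add_add_comm, hδ0, add_zero]
  set ε : ℂ := (-1:ℂ)^((i+j).val) with hε
  have hε2 : ε * ε = 1 := by
    rw [hε, ← pow_add]
    exact Even.neg_one_pow ⟨(i+j).val, rfl⟩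
  have hs2 : s * s = 1 := by rcases hs with h | h <;> rw [h] <;> norm_num
  rw [map_add, map_smul, gSym_XX d hd, gSym_XX d hd, hsum, hii, hjj, ← hε]
  rw [smul_add, smul_smul, smul_smul]
  have h1 : e * ε = s := by rw [he, mul_assoc, hε2, mul_one]
  have h2 : s * e = ε := by rw [he, ← mul_assoc, hs2, one_mul]
  rw [h1, h2]
  exact add_comm _ _

lemma W_le_sym (d : ℕ) (l : ℕ) (e : ℂ) : Wlpm d l e ≤ symSquare (2*d) := by
  rw [Wlpm, Submodule.span_le]
  rintro p ⟨i, j, hpar, rfl⟩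
  exact Submodule.add_mem _ (Submodule.subset_span ⟨i, j, rfl⟩)
    (Submodule.smul_mem _ _ (Submodule.subset_span ⟨_, _, rfl⟩))

lemma W_le_eigen (d : ℕ) (hd : 0 < d) (s : ℂ) (hs : s = 1 ∨ s = -1) :
    Wlpm d 0 s ⊔ Wlpm d 1 (-s) ≤ Module.End.eigenspace (gSym d) s := by
  apply sup_le
  · rw [Wlpm, Submodule.span_le]
    rintro p ⟨i, j, hpar, rfl⟩
    rw [SetLike.mem_coe, Module.End.mem_eigenspace_iff]
    exact gSym_gen d hd i j s hs s
      (by rw [Even.neg_one_pow (Nat.even_iff.2 hpar), mul_one])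
  · rw [Wlpm, Submodule.span_le]
    rintro p ⟨i, j, hpar, rfl⟩
    rw [SetLike.mem_coe, Module.End.mem_eigenspace_iff]
    exact gSym_gen d hd i j s hs (-s)
      (by rw [Odd.neg_one_pow (Nat.odd_iff.2 hpar), mul_neg_one])

lemma v_mem (d : ℕ) (hd : 0 < d) (u : ℂ) (i j : ZMod (2*d)) :
    (X i * X j + (u * (-1:ℂ)^((i+j).val)) •
      (X (i + (d : ZMod (2*d))) * X (j + (d : ZMod (2*d)))))
      ∈ Wlpm d 0 u ⊔ Wlpm d 1 (-u) := by
  rcases Nat.even_or_odd ((i+j).val) with hev | hod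
  · apply Submodule.mem_sup_left
    apply Submodule.subset_span
    exact ⟨i, j, Nat.even_iff.1 hev, by rw [Even.neg_one_pow hev, mul_one]⟩
  · apply Submodule.mem_sup_right
    apply Submodule.subset_span
    exact ⟨i, j, Nat.odd_iff.1 hod, by rw [Odd.neg_one_pow hod, mul_neg_one]⟩

lemma sym_le_sup (d : ℕ) (hd : 0 < d) (s : ℂ) :
    symSquare (2*d) ≤ (Wlpm d 0 s ⊔ Wlpm d 1 (-s)) ⊔ (Wlpm d 0 (-s) ⊔ Wlpm d 1 s) := by
  rw [symSquare, Submodule.span_le]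
  rintro p ⟨i, j, rfl⟩
  have hdecomp : (X i * X j : MvPolynomial (ZMod (2*d)) ℂ) =
      (2⁻¹:ℂ) • (X i * X j + (s * (-1:ℂ)^((i+j).val)) •
        (X (i + (d : ZMod (2*d))) * X (j + (d : ZMod (2*d))))) +
      (2⁻¹:ℂ) • (X i * X j + ((-s) * (-1:ℂ)^((i+j).val)) •
        (X (i + (d : ZMod (2*d))) * X (j + (d : ZMod (2*d))))) := by
    module
  rw [SetLike.mem_coe, hdecomp]
  apply Submodule.add_mem
  · exact Submodule.smul_mem _ _ (Submodule.mem_sup_left (v_mem d hd s i j))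
  · apply Submodule.smul_mem
    apply Submodule.mem_sup_right
    have := v_mem d hd (-s) i j
    rwa [neg_neg] at this

lemma inf_eq (d : ℕ) (hd : 0 < d) (s : ℂ) (hs : s = 1 ∨ s = -1) :
    symSquare (2*d) ⊓ Module.End.eigenspace (gSym d) s =
      Wlpm d 0 s ⊔ Wlpm d 1 (-s) := by
  have hA : Wlpm d 0 s ⊔ Wlpm d 1 (-s) ≤ Module.End.eigenspace (gSym d) s :=
    W_le_eigen d hd s hs
  have hB : Wlpm d 0 (-s) ⊔ Wlpm d 1 s ≤ Module.End.eigenspace (gSym d) (-s) := by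
    have := W_le_eigen d hd (-s) (by rcases hs with rfl | rfl <;> [right; left] <;> norm_num)
    rwa [neg_neg] at this
  apply le_antisymm
  · rintro p ⟨hp1, hp2⟩
    obtain ⟨x, hx, y, hy, rfl⟩ := Submodule.mem_sup.1 (sym_le_sup d hd s hp1)
    have hgx : gSym d x = s • x := Module.End.mem_eigenspace_iff.1 (hA hx)
    have hgy : gSym d y = (-s) • y := Module.End.mem_eigenspace_iff.1 (hB hy)
    have hgxy : gSym d (x + y) = s • (x + y) := Module.End.mem_eigenspace_iff.1 hp2
    rw [map_add, hgx, hgy, smul_add] at hgxy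
    have h5 : (-s) • y = s • y := add_left_cancel hgxy
    have h6 : (s - (-s)) • y = 0 := by rw [sub_smul, h5, sub_self]
    have h7 : y = 0 := by
      rcases (smul_eq_zero.1 h6) with h | h
      · exfalso
        rcases hs with rfl | rfl <;> [skip; skip] <;> norm_num at h
      · exact h
    rw [h7, add_zero]
    exact hx
  · apply le_inf
    · exact sup_le (W_le_sym d 0 s) (W_le_sym d 1 (-s))
    · exact hA

/-- `g = σ^d τ^d` satisfies `g² = (−1)^d Id_V`, hence induces an involution on
`ℙ^{2d-1}`; the eigenspace decomposition of `Sym² V` under the induced involution is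
`⟨W_0^+, W_1^-⟩ ⊕ ⟨W_0^-, W_1^+⟩`, with dimensions `(d², d(d+1))` if `d` is odd and
`(d(d+1), d²)` if `d` is even. -/
theorem gMap_involution_and_eigenspaces (d : ℕ) (hd : 0 < d) :
    (gMap d) ^ 2 = ((-1 : ℂ) ^ d) • (1 : Module.End ℂ (ZMod (2 * d) → ℂ)) ∧
    symSquare (2 * d) ⊓ Module.End.eigenspace (gSym d) 1 = Wlpm d 0 1 ⊔ Wlpm d 1 (-1) ∧
    symSquare (2 * d) ⊓ Module.End.eigenspace (gSym d) (-1) = Wlpm d 0 (-1) ⊔ Wlpm d 1 1 ∧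
    Module.finrank ℂ (Wlpm d 0 1 ⊔ Wlpm d 1 (-1) : Submodule ℂ _) =
      (if Odd d then d ^ 2 else d * (d + 1)) ∧
    Module.finrank ℂ (Wlpm d 0 (-1) ⊔ Wlpm d 1 1 : Submodule ℂ _) =
      (if Odd d then d * (d + 1) else d ^ 2) := by
  have hs1 : (1:ℂ) = 1 ∨ (1:ℂ) = -1 := Or.inl rfl
  have hsm1 : (-1:ℂ) = 1 ∨ (-1:ℂ) = -1 := Or.inr rfl
  refine ⟨gMap_sq d hd, inf_eq d hd 1 hs1, ?_, ?_, ?_⟩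
  · have h := inf_eq d hd (-1) hsm1
    rwa [neg_neg] at h
  · rcases Nat.even_or_odd d with hev | hod
    · rw [if_neg (Nat.not_odd_iff_even.2 hev)]
      rw [sup_eq d hd 1 hs1 (d+1) (Or.inr rfl)
          (by rw [if_pos rfl, Even.neg_one_pow hev, one_mul]),
        finrank_span_eq_card (fam_indep d hd 1 (d+1) (le_refl _)
          (fun _ => by rw [Even.neg_one_pow hev, one_mul]))]
      simp [Fintype.card_prod]
    · rw [if_pos hod]
      rw [sup_eq d hd 1 hs1 d (Or.inl rfl)
          (by rw [if_neg (by omega), Odd.neg_one_pow hod, one_mul]),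
        finrank_span_eq_card (fam_indep d hd 1 d (by omega)
          (fun h => absurd h (by omega)))]
      simp [Fintype.card_prod, sq]
  · rcases Nat.even_or_odd d with hev | hod
    · rw [if_neg (Nat.not_odd_iff_even.2 hev)]
      have h := sup_eq d hd (-1) hsm1 d (Or.inl rfl)
          (by rw [if_neg (by omega), Even.neg_one_pow hev, mul_one])
      rw [neg_neg] at h
      rw [h, finrank_span_eq_card (fam_indep d hd (-1) d (by omega)
          (fun h => absurd h (by omega)))]
      simp [Fintype.card_prod, sq]
    · rw [if_pos hod]
      have h := sup_eq d hd (-1) hsm1 (d+1) (Or.inr rfl)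
          (by rw [if_pos rfl, Odd.neg_one_pow hod]; norm_num)
      rw [neg_neg] at h
      rw [h, finrank_span_eq_card (fam_indep d hd (-1) (d+1) (le_refl _)
          (fun _ => by rw [Odd.neg_one_pow hod]; norm_num))]
      simp [Fintype.card_prod]
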